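/- Let (X, P_X) and (Y, P_Y) be finite metric measure spaces equipped with m-pointed partitions. Let S denote the set of probability measures on X × Y of the form μ(x,y) = Σ_{p,q} μ_m(xᵖ,y^q) μ̄_{xᵖ,y^q}(x,y), where μ_m ∈ C(μ_{P_X}, μ_{P_Y}) and each μ_{xᵖ,y^q} ∈ C(μ_{Uᵖ}, μ_{V^q}) (no positivity constraint imposed). Then S is a compact subset of the Euclidean space ℝ^{X×Y}, and if μ_X and μ_Y are fully supported, the infimum defining d_qGW is realized over S: d_qGW((X,P_X),(Y,P_Y)) = min_{μ ∈ S} GW(μ)^{1/2}. -/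

import Mathlib

open Finset

noncomputable section

/-- A probability vector on a finite type. -/
def IsProb {X : Type*} [Fintype X] (μ : X → ℝ) : Prop :=
  (∀ x, 0 ≤ μ x) ∧ (∑ x, μ x) = 1

/-- `μ` is a coupling of the probability vectors `μX` and `μY`. -/
def IsCoupling {X Y : Type*} [Fintype X] [Fintype Y]
    (μX : X → ℝ) (μY : Y → ℝ) (μ : X → Y → ℝ) : Prop :=
  (∀ x y, 0 ≤ μ x y) ∧ (∀ x, (∑ y, μ x y) = μX x) ∧ (∀ y, (∑ x, μ x y) = μY y)

/-- The Gromov–Wasserstein loss of a coupling, for given distance functions. -/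
def GWLoss {X Y : Type*} [Fintype X] [Fintype Y]
    (dX : X → X → ℝ) (dY : Y → Y → ℝ) (μ : X → Y → ℝ) : ℝ :=
  ∑ x, ∑ y, ∑ x', ∑ y', (dX x x' - dY y y') ^ 2 * μ x y * μ x' y'

/-- The Gromov–Wasserstein distance between two finite mm-spaces. -/
def dGW {X Y : Type*} [Fintype X] [Fintype Y]
    (dX : X → X → ℝ) (dY : Y → Y → ℝ) (μX : X → ℝ) (μY : Y → ℝ) : ℝ :=
  sInf {r : ℝ | ∃ μ, IsCoupling μX μY μ ∧ r = Real.sqrt (GWLoss dX dY μ)}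

/-- An `m`-pointed partition of `X`: each point is assigned to one of `m` blocks
(`part`), and each block `p` has a distinguished representative `rep p` lying in it.
Blocks are the fibers of `part`; they are disjoint, cover `X`, and are nonempty. -/
structure PointedPartition (X : Type*) (m : ℕ) where
  part : X → Fin m
  rep : Fin m → X
  part_rep : ∀ p, part (rep p) = p

/-- The mass `μ_X(Uᵖ)` of the block `Uᵖ`; as a function of `p` this is the measure
`μ_{P_X}` of the quantized representation `Xᵐ` (identified with `Fin m`). -/
def blockMass {X : Type*} [Fintype X] (μX : X → ℝ) {m : ℕ}
    (P : PointedPartition X m) (p : Fin m) : ℝ :=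
  ∑ x, if P.part x = p then μX x else 0

/-- The normalized measure `μ_{Uᵖ} = μ_X|_{Uᵖ} / μ_X(Uᵖ)` of a block, extended by zero
to all of `X` (this is `μ̄_{Uᵖ}`). -/
def blockMeasure {X : Type*} [Fintype X] (μX : X → ℝ) {m : ℕ}
    (P : PointedPartition X m) (p : Fin m) (x : X) : ℝ :=
  if P.part x = p then μX x / blockMass μX P p else 0

/-- `μ` is a quantization coupling: `μ(x,y) = Σ_{p,q} μm(xᵖ,y^q) μ̄_{xᵖ,y^q}(x,y)` where
`μm` couples the quantized measures and each `ν p q` is (the extension by zero of) a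
coupling of the block measures with `ν p q (xᵖ, y^q) > 0`. -/
def IsQuantCoupling {X Y : Type*} [Fintype X] [Fintype Y] {m : ℕ}
    (μX : X → ℝ) (μY : Y → ℝ)
    (PX : PointedPartition X m) (PY : PointedPartition Y m)
    (μ : X → Y → ℝ) : Prop :=
  ∃ (μm : Fin m → Fin m → ℝ) (ν : Fin m → Fin m → X → Y → ℝ),
    IsCoupling (blockMass μX PX) (blockMass μY PY) μm ∧
    (∀ p q, IsCoupling (blockMeasure μX PX p) (blockMeasure μY PY q) (ν p q)) ∧
    (∀ p q, 0 < ν p q (PX.rep p) (PY.rep q)) ∧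
    (∀ x y, μ x y = ∑ p, ∑ q, μm p q * ν p q x y)

/-- The quantized Gromov–Wasserstein distance between `m`-pointed mm-spaces. -/
def dqGW {X Y : Type*} [Fintype X] [Fintype Y] {m : ℕ}
    (dX : X → X → ℝ) (dY : Y → Y → ℝ) (μX : X → ℝ) (μY : Y → ℝ)
    (PX : PointedPartition X m) (PY : PointedPartition Y m) : ℝ :=
  sInf {r : ℝ | ∃ μ, IsQuantCoupling μX μY PX PY μ ∧ r = Real.sqrt (GWLoss dX dY μ)}

/-- The quantized eccentricity `q(P_X) = (Σ_p μ_X(Uᵖ) s_{Uᵖ}(xᵖ)²)^{1/2}`, where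
`s_{Uᵖ}(xᵖ)² = Σ_{x ∈ Uᵖ} d_X(xᵖ,x)² μ_{Uᵖ}(x)`. -/
def qEcc {X : Type*} [Fintype X] (dX : X → X → ℝ) (μX : X → ℝ) {m : ℕ}
    (P : PointedPartition X m) : ℝ :=
  Real.sqrt (∑ p, blockMass μX P p * ∑ x, dX (P.rep p) x ^ 2 * blockMeasure μX P p x)

/-- The `m`-quantized eccentricity `q_m(X)`: minimum of `q(P_X)` over `m`-pointed
partitions. -/
def qEccMin (X : Type*) [Fintype X] (dX : X → X → ℝ) (μX : X → ℝ) (m : ℕ) : ℝ :=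
  sInf {r : ℝ | ∃ P : PointedPartition X m, r = qEcc dX μX P}

end

/-- The set `S` of measures of quantization-coupling form, with no positivity
constraint imposed on the local couplings. -/
noncomputable def QuantCouplingSet {X Y : Type*} [Fintype X] [Fintype Y] {m : ℕ}
    (μX : X → ℝ) (μY : Y → ℝ)
    (PX : PointedPartition X m) (PY : PointedPartition Y m) : Set (X → Y → ℝ) :=
  {μ | ∃ (μm : Fin m → Fin m → ℝ) (ν : Fin m → Fin m → X → Y → ℝ),
    IsCoupling (blockMass μX PX) (blockMass μY PY) μm ∧
    (∀ p q, IsCoupling (blockMeasure μX PX p) (blockMeasure μY PY q) (ν p q)) ∧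
    (∀ x y, μ x y = ∑ p, ∑ q, μm p q * ν p q x y)}

section Aux
variable {X : Type*} [Fintype X] {m : ℕ}

lemma blockMass_nonneg (μX : X → ℝ) (h : ∀ x, 0 ≤ μX x) (P : PointedPartition X m) (p : Fin m) :
    0 ≤ blockMass μX P p :=
  Finset.sum_nonneg fun x _ => by
    split
    · exact h x
    · exact le_refl 0

lemma sum_blockMass (μX : X → ℝ) (h : ∑ x, μX x = 1) (P : PointedPartition X m) :
    ∑ p, blockMass μX P p = 1 := by
  unfold blockMass
  rw [Finset.sum_comm]
  simpa [Finset.sum_ite_eq] using h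

lemma le_blockMass (μX : X → ℝ) (h : ∀ x, 0 ≤ μX x) (P : PointedPartition X m) {p : Fin m} {x : X}
    (hx : P.part x = p) : μX x ≤ blockMass μX P p := by
  calc μX x = if P.part x = p then μX x else 0 := by rw [if_pos hx]
  _ ≤ _ := Finset.single_le_sum (f := fun x => if P.part x = p then μX x else 0)
      (fun x _ => by
        split
        · exact h x
        · exact le_refl 0) (Finset.mem_univ x)

lemma blockMass_pos (μX : X → ℝ) (h : ∀ x, 0 < μX x) (P : PointedPartition X m) (p : Fin m) :
    0 < blockMass μX P p :=
  lt_of_lt_of_le (h (P.rep p)) (le_blockMass μX (fun x => (h x).le) P (P.part_rep p))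

lemma blockMeasure_nonneg (μX : X → ℝ) (h : ∀ x, 0 ≤ μX x) (P : PointedPartition X m)
    (p : Fin m) (x : X) : 0 ≤ blockMeasure μX P p x := by
  unfold blockMeasure; split
  · exact div_nonneg (h x) (blockMass_nonneg μX h P p)
  · exact le_refl 0

lemma blockMeasure_le_one (μX : X → ℝ) (h : ∀ x, 0 ≤ μX x) (P : PointedPartition X m)
    (p : Fin m) (x : X) : blockMeasure μX P p x ≤ 1 := by
  unfold blockMeasure; split
  · rcases eq_or_lt_of_le (blockMass_nonneg μX h P p) with hm | hm
    · rw [← hm, div_zero]; exact zero_le_one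
    · exact div_le_one_of_le₀ (le_blockMass μX h P (by assumption)) hm.le
  · exact zero_le_one

lemma sum_blockMeasure (μX : X → ℝ) (P : PointedPartition X m) {p : Fin m}
    (h : blockMass μX P p ≠ 0) : ∑ x, blockMeasure μX P p x = 1 := by
  unfold blockMeasure
  have : ∀ x : X, (if P.part x = p then μX x / blockMass μX P p else 0)
      = (if P.part x = p then μX x else 0) / blockMass μX P p := by
    intro x; split <;> simp
  simp_rw [this, ← Finset.sum_div]
  exact div_self h

lemma blockMeasure_rep_pos (μX : X → ℝ) (h : ∀ x, 0 < μX x) (P : PointedPartition X m)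
    (p : Fin m) : 0 < blockMeasure μX P p (P.rep p) := by
  unfold blockMeasure
  rw [if_pos (P.part_rep p)]
  exact div_pos (h _) (blockMass_pos μX h P p)

variable {Y : Type*} [Fintype Y]

lemma isClosed_isCoupling (μX : X → ℝ) (μY : Y → ℝ) :
    IsClosed {μ : X → Y → ℝ | IsCoupling μX μY μ} := by
  have : {μ : X → Y → ℝ | IsCoupling μX μY μ} =
      (⋂ x, ⋂ y, {μ : X → Y → ℝ | 0 ≤ μ x y}) ∩
      ((⋂ x, {μ : X → Y → ℝ | ∑ y, μ x y = μX x}) ∩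
       (⋂ y, {μ : X → Y → ℝ | ∑ x, μ x y = μY y})) := by
    ext μ
    simp only [IsCoupling, Set.mem_setOf_eq, Set.mem_inter_iff, Set.mem_iInter]
  rw [this]
  have heval : ∀ (x : X) (y : Y), Continuous fun μ : X → Y → ℝ => μ x y := fun x y =>
    (continuous_apply y).comp (continuous_apply x)
  refine IsClosed.inter ?_ (IsClosed.inter ?_ ?_)
  · exact isClosed_iInter fun x => isClosed_iInter fun y =>
      isClosed_le continuous_const (heval x y)
  · exact isClosed_iInter fun x => isClosed_eq
      (continuous_finset_sum _ fun y _ => heval x y) continuous_const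
  · exact isClosed_iInter fun y => isClosed_eq
      (continuous_finset_sum _ fun x _ => heval x y) continuous_const

lemma continuous_GWLoss (dX : X → X → ℝ) (dY : Y → Y → ℝ) :
    Continuous fun μ : X → Y → ℝ =>
      ∑ x, ∑ y, ∑ x', ∑ y', (dX x x' - dY y y') ^ 2 * μ x y * μ x' y' := by
  have heval : ∀ (x : X) (y : Y), Continuous fun μ : X → Y → ℝ => μ x y := fun x y =>
    (continuous_apply y).comp (continuous_apply x)
  refine continuous_finset_sum _ fun x _ => continuous_finset_sum _ fun y _ =>
    continuous_finset_sum _ fun x' _ => continuous_finset_sum _ fun y' _ =>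
      ((continuous_const.mul (heval x y)).mul (heval x' y'))

end Aux


/-- `S` is compact, and for fully supported measures the infimum defining
quantized GW distance is realized over `S`. -/
theorem quantCouplingSet_compact_and_dqGW_attained
    {X Y : Type*} [Fintype X] [Fintype Y] [MetricSpace X] [MetricSpace Y] {m : ℕ}
    (μX : X → ℝ) (μY : Y → ℝ) (hμX : IsProb μX) (hμY : IsProb μY)
    (PX : PointedPartition X m) (PY : PointedPartition Y m) :
    IsCompact (QuantCouplingSet μX μY PX PY) ∧
    ((∀ x, 0 < μX x) → (∀ y, 0 < μY y) →
      ∃ μ₀ ∈ QuantCouplingSet μX μY PX PY,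
        (∀ μ' ∈ QuantCouplingSet μX μY PX PY,
          Real.sqrt (GWLoss (fun x x' => dist x x') (fun y y' => dist y y') μ₀) ≤
            Real.sqrt (GWLoss (fun x x' => dist x x') (fun y y' => dist y y') μ')) ∧
        dqGW (fun x x' => dist x x') (fun y y' => dist y y') μX μY PX PY =
          Real.sqrt (GWLoss (fun x x' => dist x x') (fun y y' => dist y y') μ₀)) := by

  classical
  have heval : ∀ (x : X) (y : Y), Continuous fun μ : X → Y → ℝ => μ x y := fun x y =>
    (continuous_apply y).comp (continuous_apply x)
  -- The parameter space
  have hKcomp : IsCompact {z : (Fin m → Fin m → ℝ) × (Fin m → Fin m → X → Y → ℝ) |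
      IsCoupling (blockMass μX PX) (blockMass μY PY) z.1 ∧
      ∀ p q, IsCoupling (blockMeasure μX PX p) (blockMeasure μY PY q) (z.2 p q)} := by
    have hT : IsCompact ((Set.univ.pi fun _ : Fin m => Set.univ.pi fun _ : Fin m =>
        Set.Icc (0:ℝ) 1) ×ˢ (Set.univ.pi fun _ : Fin m => Set.univ.pi fun _ : Fin m =>
        Set.univ.pi fun _ : X => Set.univ.pi fun _ : Y => Set.Icc (0:ℝ) 1)) :=
      (isCompact_univ_pi fun _ => isCompact_univ_pi fun _ => isCompact_Icc).prod
        (isCompact_univ_pi fun _ => isCompact_univ_pi fun _ => isCompact_univ_pi fun _ =>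
          isCompact_univ_pi fun _ => isCompact_Icc)
    refine IsCompact.of_isClosed_subset hT ?_ ?_
    · -- closedness
      have : {z : (Fin m → Fin m → ℝ) × (Fin m → Fin m → X → Y → ℝ) |
          IsCoupling (blockMass μX PX) (blockMass μY PY) z.1 ∧
          ∀ p q, IsCoupling (blockMeasure μX PX p) (blockMeasure μY PY q) (z.2 p q)} =
          (Prod.fst ⁻¹' {a : Fin m → Fin m → ℝ |
              IsCoupling (blockMass μX PX) (blockMass μY PY) a}) ∩
          ⋂ p, ⋂ q, (fun z : (Fin m → Fin m → ℝ) × (Fin m → Fin m → X → Y → ℝ) =>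
              z.2 p q) ⁻¹' {ν : X → Y → ℝ |
              IsCoupling (blockMeasure μX PX p) (blockMeasure μY PY q) ν} := by
        ext z
        simp only [Set.mem_setOf_eq, Set.mem_inter_iff, Set.mem_preimage, Set.mem_iInter]
      rw [this]
      exact ((isClosed_isCoupling _ _).preimage continuous_fst).inter
        (isClosed_iInter fun p => isClosed_iInter fun q =>
          (isClosed_isCoupling _ _).preimage
            ((continuous_apply q).comp ((continuous_apply p).comp continuous_snd)))
    · -- boundedness
      rintro ⟨a, b⟩ ⟨h1, h2⟩
      constructor
      · rw [Set.mem_univ_pi]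
        intro p
        rw [Set.mem_univ_pi]
        intro q
        refine ⟨h1.1 p q, ?_⟩
        calc a p q ≤ ∑ q', a p q' :=
              Finset.single_le_sum (fun q' _ => h1.1 p q') (Finset.mem_univ q)
          _ = blockMass μX PX p := h1.2.1 p
          _ ≤ ∑ p', blockMass μX PX p' :=
              Finset.single_le_sum (fun p' _ => blockMass_nonneg μX hμX.1 PX p')
                (Finset.mem_univ p)
          _ = 1 := sum_blockMass μX hμX.2 PX
      · rw [Set.mem_univ_pi]
        intro p
        rw [Set.mem_univ_pi]
        intro q
        rw [Set.mem_univ_pi]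
        intro x
        rw [Set.mem_univ_pi]
        intro y
        refine ⟨(h2 p q).1 x y, ?_⟩
        calc b p q x y ≤ ∑ y', b p q x y' :=
              Finset.single_le_sum (fun y' _ => (h2 p q).1 x y') (Finset.mem_univ y)
          _ = blockMeasure μX PX p x := (h2 p q).2.1 x
          _ ≤ 1 := blockMeasure_le_one μX hμX.1 PX p x
  have hFcont : Continuous fun z : (Fin m → Fin m → ℝ) × (Fin m → Fin m → X → Y → ℝ) =>
      fun x y => ∑ p, ∑ q, z.1 p q * z.2 p q x y := by
    refine continuous_pi fun x => continuous_pi fun y =>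
      continuous_finset_sum _ fun p _ => continuous_finset_sum _ fun q _ =>
        Continuous.mul ?_ ?_
    · exact (continuous_apply q).comp ((continuous_apply p).comp continuous_fst)
    · exact (continuous_apply y).comp ((continuous_apply x).comp
        ((continuous_apply q).comp ((continuous_apply p).comp continuous_snd)))
  have himg : QuantCouplingSet μX μY PX PY =
      (fun z : (Fin m → Fin m → ℝ) × (Fin m → Fin m → X → Y → ℝ) =>
        fun x y => ∑ p, ∑ q, z.1 p q * z.2 p q x y) ''
      {z | IsCoupling (blockMass μX PX) (blockMass μY PY) z.1 ∧
        ∀ p q, IsCoupling (blockMeasure μX PX p) (blockMeasure μY PY q) (z.2 p q)} := by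
    ext μ
    constructor
    · rintro ⟨μm, ν, h1, h2, h3⟩
      exact ⟨(μm, ν), ⟨h1, h2⟩, funext fun x => funext fun y => (h3 x y).symm⟩
    · rintro ⟨⟨μm, ν⟩, ⟨h1, h2⟩, rfl⟩
      exact ⟨μm, ν, h1, h2, fun x y => rfl⟩
  have hScomp : IsCompact (QuantCouplingSet μX μY PX PY) := by
    rw [himg]; exact hKcomp.image hFcont
  refine ⟨hScomp, fun hfX hfY => ?_⟩
  set dX : X → X → ℝ := fun x x' => dist x x' with hdX
  set dY : Y → Y → ℝ := fun y y' => dist y y' with hdY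
  set f : (X → Y → ℝ) → ℝ := fun μ => Real.sqrt (GWLoss dX dY μ) with hf
  have hfcont : Continuous f := by
    refine Real.continuous_sqrt.comp ?_
    unfold GWLoss
    exact continuous_GWLoss dX dY
  -- product couplings
  set πm : Fin m → Fin m → ℝ := fun p q => blockMass μX PX p * blockMass μY PY q with hπm
  set πν : Fin m → Fin m → X → Y → ℝ :=
    fun p q x y => blockMeasure μX PX p x * blockMeasure μY PY q y with hπν
  have hπmC : IsCoupling (blockMass μX PX) (blockMass μY PY) πm := by
    refine ⟨fun p q => mul_nonneg (blockMass_nonneg μX hμX.1 PX p)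
      (blockMass_nonneg μY hμY.1 PY q), fun p => ?_, fun q => ?_⟩
    · rw [← Finset.mul_sum, sum_blockMass μY hμY.2 PY, mul_one]
    · rw [← Finset.sum_mul, sum_blockMass μX hμX.2 PX, one_mul]
  have hπνC : ∀ p q, IsCoupling (blockMeasure μX PX p) (blockMeasure μY PY q) (πν p q) := by
    intro p q
    refine ⟨fun x y => mul_nonneg (blockMeasure_nonneg μX hμX.1 PX p x)
      (blockMeasure_nonneg μY hμY.1 PY q y), fun x => ?_, fun y => ?_⟩
    · rw [← Finset.mul_sum, sum_blockMeasure μY PY (blockMass_pos μY hfY PY q).ne', mul_one]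
    · rw [← Finset.sum_mul, sum_blockMeasure μX PX (blockMass_pos μX hfX PX p).ne', one_mul]
  have hπνpos : ∀ p q, 0 < πν p q (PX.rep p) (PY.rep q) := fun p q =>
    mul_pos (blockMeasure_rep_pos μX hfX PX p) (blockMeasure_rep_pos μY hfY PY q)
  have hprodS : (fun x y => ∑ p, ∑ q, πm p q * πν p q x y) ∈ QuantCouplingSet μX μY PX PY :=
    ⟨πm, πν, hπmC, hπνC, fun x y => rfl⟩
  obtain ⟨μ₀, hμ₀S, hmin⟩ := hScomp.exists_isMinOn ⟨_, hprodS⟩ hfcont.continuousOn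
  have hmin' : ∀ μ' ∈ QuantCouplingSet μX μY PX PY, f μ₀ ≤ f μ' := fun μ' h => hmin h
  refine ⟨μ₀, hμ₀S, hmin', ?_⟩
  obtain ⟨μm, ν, hμm, hν, hrepr⟩ := hμ₀S
  have hbdd : BddBelow {r : ℝ | ∃ μ, IsQuantCoupling μX μY PX PY μ ∧
      r = Real.sqrt (GWLoss dX dY μ)} := by
    refine ⟨0, ?_⟩
    rintro r ⟨μ, _, rfl⟩
    exact Real.sqrt_nonneg _
  have hQne : ∃ μ, IsQuantCoupling μX μY PX PY μ := by
    exact ⟨_, πm, πν, hπmC, hπνC, hπνpos, fun x y => rfl⟩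
  refine le_antisymm ?_ ?_
  · -- dqGW ≤ f μ₀ via perturbation
    set g : ℝ → ℝ := fun ε => f (fun x y =>
      ∑ p, ∑ q, μm p q * ((1 - ε) * ν p q x y + ε * πν p q x y)) with hg
    have hgcont : Continuous g := by
      refine Real.continuous_sqrt.comp ?_
      unfold GWLoss
      refine continuous_finset_sum _ fun x _ => continuous_finset_sum _ fun y _ =>
        continuous_finset_sum _ fun x' _ => continuous_finset_sum _ fun y' _ => ?_
      have he : ∀ (x : X) (y : Y), Continuous fun ε : ℝ =>
          ∑ p, ∑ q, μm p q * ((1 - ε) * ν p q x y + ε * πν p q x y) := by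
        intro x y
        refine continuous_finset_sum _ fun p _ => continuous_finset_sum _ fun q _ => ?_
        fun_prop
      exact (continuous_const.mul (he x y)).mul (he x' y')
    have hg0 : g 0 = f μ₀ := by
      have : (fun x y => ∑ p, ∑ q, μm p q * ((1 - (0:ℝ)) * ν p q x y + 0 * πν p q x y)) = μ₀ := by
        funext x y
        rw [hrepr x y]
        congr 1
        funext p
        congr 1
        funext q
        ring
      rw [hg]
      simp only [this]
    have hle : ∀ n : ℕ, dqGW dX dY μX μY PX PY ≤ g (1 / (n + 1)) := by
      intro n
      set ε : ℝ := 1 / ((n : ℝ) + 1) with hε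
      have hε0 : 0 < ε := by positivity
      have hε1 : ε ≤ 1 := by
        rw [hε, div_le_one (by positivity)]
        have : (0:ℝ) ≤ (n : ℝ) := Nat.cast_nonneg n
        linarith
      have hquant : IsQuantCoupling μX μY PX PY (fun x y =>
          ∑ p, ∑ q, μm p q * ((1 - ε) * ν p q x y + ε * πν p q x y)) := by
        refine ⟨μm, fun p q x y => (1 - ε) * ν p q x y + ε * πν p q x y, hμm,
          fun p q => ?_, fun p q => ?_, fun x y => rfl⟩
        · refine ⟨fun x y => add_nonneg (mul_nonneg (by linarith) ((hν p q).1 x y))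
            (mul_nonneg hε0.le ((hπνC p q).1 x y)), fun x => ?_, fun y => ?_⟩
          · rw [Finset.sum_add_distrib, ← Finset.mul_sum, ← Finset.mul_sum,
              (hν p q).2.1 x, (hπνC p q).2.1 x]
            ring
          · rw [Finset.sum_add_distrib, ← Finset.mul_sum, ← Finset.mul_sum,
              (hν p q).2.2 y, (hπνC p q).2.2 y]
            ring
        · exact add_pos_of_nonneg_of_pos
            (mul_nonneg (by linarith) ((hν p q).1 _ _)) (mul_pos hε0 (hπνpos p q))
      exact csInf_le hbdd ⟨_, hquant, rfl⟩
    have htend : Filter.Tendsto (fun n : ℕ => g (1 / (n + 1))) Filter.atTop (nhds (g 0)) :=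
      (hgcont.tendsto 0).comp tendsto_one_div_add_atTop_nhds_zero_nat
    have hfin : dqGW dX dY μX μY PX PY ≤ f μ₀ := hg0 ▸ ge_of_tendsto' htend hle
    exact hfin
  · -- f μ₀ ≤ dqGW
    refine le_csInf ?_ ?_
    · obtain ⟨μ, hμ⟩ := hQne
      exact ⟨_, μ, hμ, rfl⟩
    · rintro r ⟨μ, ⟨μm', ν', h1, h2, _, h4⟩, rfl⟩
      exact hmin' μ ⟨μm', ν', h1, h2, h4⟩
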